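/- Let L be a finite-dimensional Lie algebra and suppose the chief factors A/B and C/D of L are m-related. Then A/B is Frattini if and only if C/D is Frattini. -/

import Mathlib

section ChiefFactors

variable (K : Type*) (L : Type*) [Field K] [LieRing L] [LieAlgebra K L]

/-- `A/B` is a chief factor of `L`: `B` is an ideal and `A/B` is a minimal ideal of `L/B`,
i.e. `B < A` and there is no ideal strictly between `B` and `A`. -/
def IsChiefFactor (A B : LieIdeal K L) : Prop :=
  B < A ∧ ∀ C : LieIdeal K L, B < C → C ≤ A → C = A

/-- The factor `A/B` is abelian. -/
def FactorAbelian (A B : LieIdeal K L) : Prop :=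
  ∀ a ∈ A, ∀ a' ∈ A, ⁅a, a'⁆ ∈ B

/-- `M` is a maximal (proper) subalgebra of `L`. -/
def IsMaximalSubalgebra (M : LieSubalgebra K L) : Prop :=
  M ≠ ⊤ ∧ ∀ N : LieSubalgebra K L, M < N → N = ⊤

/-- `L = A + M`. -/
def SumIsTop (A : LieIdeal K L) (M : LieSubalgebra K L) : Prop :=
  ∀ x : L, ∃ a ∈ A, ∃ m ∈ M, x = a + m

/-- `M` supplements the factor `A/B` : `L = A + M` and `B ⊆ A ∩ M`. -/
def Supplements (M : LieSubalgebra K L) (A B : LieIdeal K L) : Prop :=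
  SumIsTop K L A M ∧ B ≤ A ∧ (B : Set L) ⊆ M

/-- `M` complements the factor `A/B` : `L = A + M` and `A ∩ M = B`. -/
def Complements (M : LieSubalgebra K L) (A B : LieIdeal K L) : Prop :=
  SumIsTop K L A M ∧ (A : Set L) ∩ M = B

/-- `A/B` is a supplemented chief factor (supplemented by a maximal subalgebra). -/
def SupplementedFactor (A B : LieIdeal K L) : Prop :=
  ∃ M : LieSubalgebra K L, IsMaximalSubalgebra K L M ∧ Supplements K L M A B

/-- `A/B` is a Frattini chief factor: `A/B ⊆ φ(L/B)`, equivalently `A` is contained in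
every maximal subalgebra of `L` containing `B`. -/
def FrattiniFactor (A B : LieIdeal K L) : Prop :=
  IsChiefFactor K L A B ∧
    ∀ M : LieSubalgebra K L, IsMaximalSubalgebra K L M → (B : Set L) ⊆ M → (A : Set L) ⊆ M

/-- `A/B ↘ C/D` : `A = B + C` and `B ∩ C = D`. -/
def Searrow (A B C D : LieIdeal K L) : Prop := A = B ⊔ C ∧ B ⊓ C = D

/-- `[A/B ↘ C/D]` is an m-crossing. -/
def MCrossing (A B C D : LieIdeal K L) : Prop :=
  IsChiefFactor K L A B ∧ IsChiefFactor K L C D ∧ Searrow K L A B C D ∧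
    FrattiniFactor K L A B ∧ SupplementedFactor K L C D

/-- The chief factors `A/B` and `C/D` are m-related. -/
def MRelated (A B C D : LieIdeal K L) : Prop :=
  (∃ R S, IsChiefFactor K L R S ∧ SupplementedFactor K L R S ∧
     Searrow K L R S A B ∧ Searrow K L R S C D) ∨
  (∃ U V W X, MCrossing K L U V W X ∧ Searrow K L V X A B ∧ Searrow K L W X C D) ∨
  (∃ Y Z, FrattiniFactor K L Y Z ∧ Searrow K L A B Y Z ∧ Searrow K L C D Y Z) ∨
  (∃ U V W X, MCrossing K L U V W X ∧ Searrow K L A B U V ∧ Searrow K L C D U W)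

/-- `I` is the core `M_L` of the subalgebra `M`: the largest ideal of `L` contained in `M`. -/
def IsCoreOf (I : LieIdeal K L) (M : LieSubalgebra K L) : Prop :=
  (I : Set L) ⊆ M ∧ ∀ J : LieIdeal K L, (J : Set L) ⊆ M → J ≤ I

/-- The quotient `L/I` is primitive: it has a core-free maximal subalgebra. -/
def QuotPrimitive (I : LieIdeal K L) : Prop :=
  ∃ M : LieSubalgebra K L, IsMaximalSubalgebra K L M ∧ IsCoreOf K L I M

/-- The quotient `L/I` is monolithic: it has a unique minimal ideal. -/
def QuotMonolithic (I : LieIdeal K L) : Prop :=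
  ∃! J : LieIdeal K L, IsChiefFactor K L J I

/-- `M` is a monolithic maximal subalgebra supplementing `A/B` :
`L/M_L` is a monolithic primitive Lie algebra. -/
def MonolithicSupplement (M : LieSubalgebra K L) (A B : LieIdeal K L) : Prop :=
  IsMaximalSubalgebra K L M ∧ Supplements K L M A B ∧
    ∃ I : LieIdeal K L, IsCoreOf K L I M ∧ QuotMonolithic K L I

/-- `A/B` and `C/D` are `L`-isomorphic: there is an isomorphism of `L`-modules between
the factors which moreover preserves the induced Lie brackets. -/
def LIso (A B C D : LieIdeal K L) : Prop :=
  B ≤ A ∧ D ≤ C ∧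
  ∃ e : (A ⧸ (LieSubmodule.comap (LieSubmodule.incl A) B)) ≃ₗ⁅K,L⁆
        (C ⧸ (LieSubmodule.comap (LieSubmodule.incl C) D)),
    ∀ (a a' : A) (c c' : C),
      e (LieSubmodule.Quotient.mk a) = LieSubmodule.Quotient.mk c →
      e (LieSubmodule.Quotient.mk a') = LieSubmodule.Quotient.mk c' →
      e (LieSubmodule.Quotient.mk ⟨⁅(a : L), (a' : L)⁆, A.lie_mem a'.2⟩) =
        LieSubmodule.Quotient.mk ⟨⁅(c : L), (c' : L)⁆, C.lie_mem c'.2⟩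

/-- `L/I` is a primitive Lie algebra of type 3 with (exactly two) minimal ideals
`J1/I` and `J2/I`, both non-abelian. -/
def QuotPrimitiveType3 (I J1 J2 : LieIdeal K L) : Prop :=
  QuotPrimitive K L I ∧ J1 ≠ J2 ∧ IsChiefFactor K L J1 I ∧ IsChiefFactor K L J2 I ∧
    ¬ FactorAbelian K L J1 I ∧ ¬ FactorAbelian K L J2 I ∧
    ∀ J : LieIdeal K L, IsChiefFactor K L J I → J = J1 ∨ J = J2

/-- `A/B` and `C/D` are `L`-connected. -/
def LConnected (A B C D : LieIdeal K L) : Prop :=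
  LIso K L A B C D ∨
    ∃ I J1 J2 : LieIdeal K L, QuotPrimitiveType3 K L I J1 J2 ∧
      LIso K L J1 I A B ∧ LIso K L J2 I C D

end ChiefFactors

variable {K : Type*} {L : Type*} [Field K] [LieRing L] [LieAlgebra K L]
variable [FiniteDimensional K L]

section MRelAux

variable {K : Type*} {L : Type*} [Field K] [LieRing L] [LieAlgebra K L]

/-- Strict inclusions of Lie subalgebras give strict inequalities of finrank. -/
lemma MRel.finrank_lt_of_lt [FiniteDimensional K L] {S T : LieSubalgebra K L} (h : S < T) :
    Module.finrank K S.toSubmodule < Module.finrank K T.toSubmodule := by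
  have h1 : S.toSubmodule ≤ T.toSubmodule := h.le
  have h2 : S.toSubmodule ≠ T.toSubmodule := by
    intro he
    refine h.ne (SetLike.ext fun x => ?_)
    rw [← LieSubalgebra.mem_toSubmodule, he, LieSubalgebra.mem_toSubmodule]
  exact Submodule.finrank_lt_finrank_of_lt (lt_of_le_of_ne h1 h2)

/-- Every proper subalgebra of a finite-dimensional Lie algebra lies in a maximal subalgebra. -/
lemma MRel.exists_le_maximal [FiniteDimensional K L] (S : LieSubalgebra K L) (hS : S ≠ ⊤) :
    ∃ M : LieSubalgebra K L, IsMaximalSubalgebra K L M ∧ S ≤ M := by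
  suffices h : ∀ n (S : LieSubalgebra K L),
      Module.finrank K L - Module.finrank K S.toSubmodule ≤ n → S ≠ ⊤ →
      ∃ M : LieSubalgebra K L, IsMaximalSubalgebra K L M ∧ S ≤ M from h _ S le_rfl hS
  intro n
  induction n with
  | zero =>
    intro S hn hS
    exfalso
    have hlt : S < ⊤ := lt_of_le_of_ne le_top hS
    have h1 := MRel.finrank_lt_of_lt hlt
    rw [LieSubalgebra.top_toSubmodule] at h1
    have h2 : Module.finrank K (⊤ : Submodule K L) = Module.finrank K L := finrank_top K L
    omega
  | succ n ih =>
    intro S hn hS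
    by_cases hmax : ∀ T, S < T → T = ⊤
    · exact ⟨S, ⟨hS, hmax⟩, le_rfl⟩
    · push_neg at hmax
      obtain ⟨T, hST, hT⟩ := hmax
      have h1 := MRel.finrank_lt_of_lt hST
      have h2 : Module.finrank K T.toSubmodule ≤ Module.finrank K L :=
        T.toSubmodule.finrank_le
      obtain ⟨M, hM, hTM⟩ := ih T (by omega) hT
      exact ⟨M, hM, hST.le.trans hTM⟩

/-- If an ideal is not contained in a maximal subalgebra, together they span. -/
lemma MRel.sumIsTop_of_not_subset {A : LieIdeal K L} {M : LieSubalgebra K L}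
    (hM : IsMaximalSubalgebra K L M) (hA : ¬ (A : Set L) ⊆ M) : SumIsTop K L A M := by
  set p : Submodule K L := (A : Submodule K L) ⊔ M.toSubmodule with hp
  have hmem : ∀ {x : L}, x ∈ p → ∃ a ∈ A, ∃ m ∈ M, x = a + m := by
    intro x hx
    obtain ⟨a, ha, m, hm, hs⟩ := Submodule.mem_sup.mp hx
    exact ⟨a, (LieSubmodule.mem_toSubmodule _).mp ha, m, hm, hs.symm⟩
  have hAp : ∀ {a : L}, a ∈ A → a ∈ p :=
    fun ha => Submodule.mem_sup_left ((LieSubmodule.mem_toSubmodule _).mpr ha)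
  have hMp : ∀ {m : L}, m ∈ M → m ∈ p := fun hm => Submodule.mem_sup_right hm
  let S : LieSubalgebra K L :=
    { toSubmodule := p
      lie_mem' := by
        intro x y hx hy
        obtain ⟨a, ha, m, hm, rfl⟩ := hmem hx
        obtain ⟨a', ha', m', hm', rfl⟩ := hmem hy
        have e : ⁅a + m, a' + m'⁆ = (⁅a + m, a'⁆ + ⁅a, m'⁆) + ⁅m, m'⁆ := by
          simp only [lie_add, add_lie]; abel
        show ⁅a + m, a' + m'⁆ ∈ p
        rw [e]
        refine add_mem (add_mem ?_ ?_) (hMp (M.lie_mem hm hm'))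
        · exact hAp (lie_mem_right K L A (a + m) a' ha')
        · exact hAp (lie_mem_left K L A a m' ha) }
  have hMS : M ≤ S := fun x hx => hMp hx
  have hne : M ≠ S := by
    intro he
    rw [Set.not_subset] at hA
    obtain ⟨a, haA, haM⟩ := hA
    have : a ∈ M := by rw [he]; exact hAp haA
    exact haM this
  have hST : S = ⊤ := hM.2 S (lt_of_le_of_ne hMS hne)
  intro x
  have hx : x ∈ S := by rw [hST]; exact LieSubalgebra.mem_top x
  exact hmem hx

/-- A supplementing maximal subalgebra does not contain the top of the factor. -/
lemma MRel.not_subset_of_supplements {N : LieSubalgebra K L} {W X : LieIdeal K L}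
    (hN : IsMaximalSubalgebra K L N) (h : Supplements K L N W X) : ¬ (W : Set L) ⊆ N := by
  intro hWN
  apply hN.1
  rw [eq_top_iff]
  intro x _
  obtain ⟨w, hw, n, hn, hx⟩ := h.1 x
  rw [hx]
  exact N.add_mem (hWN hw) hn

/-- A factor sitting over a Frattini factor is Frattini. -/
lemma MRel.frattini_of_searrow_up {Y Z A B : LieIdeal K L}
    (hAB : IsChiefFactor K L A B) (hYZ : FrattiniFactor K L Y Z)
    (h1 : A = B ⊔ Y) (h2 : B ⊓ Y = Z) : FrattiniFactor K L A B := by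
  refine ⟨hAB, fun M hM hBM => ?_⟩
  have hZB : Z ≤ B := h2 ▸ inf_le_left
  have hYM : (Y : Set L) ⊆ M := hYZ.2 M hM (fun x hx => hBM (hZB hx))
  intro x hx
  have hx' : x ∈ B ⊔ Y := by rw [← h1]; exact hx
  obtain ⟨b, hb, y, hy, hs⟩ := (LieSubmodule.mem_sup _ _ x).mp hx'
  rw [← hs]
  exact M.add_mem (hBM hb) (hYM hy)

/-- A factor sitting under a supplemented factor is not Frattini. -/
lemma MRel.not_frattini_of_searrow_down {R S A B : LieIdeal K L}
    (hsup : SupplementedFactor K L R S) (h1 : R = S ⊔ A) (h2 : S ⊓ A = B) :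
    ¬ FrattiniFactor K L A B := by
  intro hF
  obtain ⟨M, hM, hMsup⟩ := hsup
  have hRM : ¬ (R : Set L) ⊆ M := MRel.not_subset_of_supplements hM hMsup
  have hBS : B ≤ S := h2 ▸ inf_le_left
  have hBM : (B : Set L) ⊆ M := fun x hx => hMsup.2.2 (hBS hx)
  have hAM := hF.2 M hM hBM
  apply hRM
  intro x hx
  have hx' : x ∈ S ⊔ A := by rw [← h1]; exact hx
  obtain ⟨s, hs, a, ha, hsa⟩ := (LieSubmodule.mem_sup _ _ x).mp hx'
  rw [← hsa]
  exact M.add_mem (hMsup.2.2 hs) (hAM ha)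

/-- Case 2, left side: a factor sitting under `V/X` in an m-crossing is not Frattini. -/
lemma MRel.case2_left {U V W X A B : LieIdeal K L}
    (hcr : MCrossing K L U V W X) (h1 : V = X ⊔ A) (h2 : X ⊓ A = B) :
    ¬ FrattiniFactor K L A B := by
  obtain ⟨hUVc, hWXc, ⟨hsU, hsX⟩, hUVf, N, hN, hNsup⟩ := hcr
  have hWN : ¬ (W : Set L) ⊆ N := MRel.not_subset_of_supplements hN hNsup
  intro hF
  have hBX : B ≤ X := h2 ▸ inf_le_left
  have hAN : (A : Set L) ⊆ N := hF.2 N hN (fun x hx => hNsup.2.2 (hBX hx))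
  have hVN : (V : Set L) ⊆ N := by
    intro x hx
    have hx' : x ∈ X ⊔ A := by rw [← h1]; exact hx
    obtain ⟨x1, hx1, a, ha, hs⟩ := (LieSubmodule.mem_sup _ _ x).mp hx'
    rw [← hs]
    exact N.add_mem (hNsup.2.2 hx1) (hAN ha)
  have hUN := hUVf.2 N hN hVN
  have hWU : W ≤ U := hsU ▸ le_sup_right
  exact hWN (fun x hx => hUN (hWU hx))

/-- Case 2, right side: a factor sitting under `W/X` in an m-crossing is not Frattini. -/
lemma MRel.case2_right {U V W X C D : LieIdeal K L}
    (hcr : MCrossing K L U V W X) (h1 : W = X ⊔ C) (h2 : X ⊓ C = D) :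
    ¬ FrattiniFactor K L C D := by
  obtain ⟨hUVc, hWXc, ⟨hsU, hsX⟩, hUVf, N, hN, hNsup⟩ := hcr
  have hWN : ¬ (W : Set L) ⊆ N := MRel.not_subset_of_supplements hN hNsup
  intro hF
  have hDX : D ≤ X := h2 ▸ inf_le_left
  have hCN : (C : Set L) ⊆ N := hF.2 N hN (fun x hx => hNsup.2.2 (hDX hx))
  apply hWN
  intro x hx
  have hx' : x ∈ X ⊔ C := by rw [← h1]; exact hx
  obtain ⟨x1, hx1, c, hc, hs⟩ := (LieSubmodule.mem_sup _ _ x).mp hx'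
  rw [← hs]
  exact N.add_mem (hNsup.2.2 hx1) (hCN hc)

/-- Case 4, right side: a chief factor sitting over `U/W` in an m-crossing is Frattini. -/
lemma MRel.case4_right [FiniteDimensional K L] {U V W X C D : LieIdeal K L}
    (hcr : MCrossing K L U V W X) (hCD : IsChiefFactor K L C D)
    (h1 : C = D ⊔ U) (h2 : D ⊓ U = W) : FrattiniFactor K L C D := by
  obtain ⟨hUVc, hWXc, ⟨hsU, hsX⟩, hUVf, N, hN, hNsup⟩ := hcr
  have hWN : ¬ (W : Set L) ⊆ N := MRel.not_subset_of_supplements hN hNsup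
  have hXN : (X : Set L) ⊆ N := hNsup.2.2
  have hWU : W ≤ U := hsU ▸ le_sup_right
  have hVU : V ≤ U := hsU ▸ le_sup_left
  have hXV : X ≤ V := hsX ▸ inf_le_left
  have hXW : X ≤ W := hsX ▸ inf_le_right
  have hWD : W ≤ D := h2 ▸ inf_le_left
  have hUC : U ≤ C := h1 ▸ le_sup_right
  have hVN : ¬ (V : Set L) ⊆ N := fun h => hWN (fun x hx => hUVf.2 N hN h (hWU hx))
  have hXltV : X < V := by
    refine lt_of_le_of_ne hXV (fun he => ?_)
    exact hVN (he ▸ hXN)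
  have hWltU : W < U := by
    refine lt_of_le_of_ne hWU (fun he => ?_)
    have hVW : V ≤ W := he ▸ hVU
    have hVX : V ≤ X := hsX ▸ le_inf le_rfl hVW
    exact hXltV.not_ge hVX
  have hUWc : IsChiefFactor K L U W := by
    refine ⟨hWltU, fun E hWE hEU => ?_⟩
    have hDE : D < D ⊔ E := by
      refine lt_of_le_of_ne le_sup_left (fun he => ?_)
      have hE : E ≤ D := he ▸ le_sup_right
      have hEW : E ≤ W := h2 ▸ le_inf hE hEU
      exact hWE.not_ge hEW
    have hDEC : D ⊔ E ≤ C := by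
      rw [h1]
      exact sup_le_sup_left hEU D
    have hCeq : D ⊔ E = C := hCD.2 _ hDE hDEC
    have h3 : (E ⊔ D) ⊓ U = E ⊔ (D ⊓ U) := sup_inf_assoc_of_le _ hEU
    rw [h2, sup_comm E D, hCeq, inf_eq_right.mpr hUC, sup_eq_left.mpr hWE.le] at h3
    exact h3.symm
  have hVXc : IsChiefFactor K L V X := by
    refine ⟨hXltV, fun F hXF hFV => ?_⟩
    have hWF : W < F ⊔ W := by
      refine lt_of_le_of_ne le_sup_right (fun he => ?_)
      have hF : F ≤ W := he ▸ le_sup_left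
      have hFX : F ≤ X := hsX ▸ le_inf hFV hF
      exact hXF.not_ge hFX
    have hFWU : F ⊔ W ≤ U := by
      rw [hsU]
      exact sup_le_sup_right hFV W
    have hUeq : F ⊔ W = U := hUWc.2 _ hWF hFWU
    have h3 : (F ⊔ W) ⊓ V = F ⊔ (W ⊓ V) := sup_inf_assoc_of_le _ hFV
    rw [hUeq, inf_comm W V, hsX, inf_eq_right.mpr hVU, sup_eq_left.mpr hXF.le] at h3
    exact h3.symm
  refine ⟨hCD, fun M hM hDM => ?_⟩
  have hWM : (W : Set L) ⊆ M := fun x hx => hDM (hWD hx)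
  by_cases hVM : (V : Set L) ⊆ M
  · intro x hx
    have hx' : x ∈ D ⊔ U := by rw [← h1]; exact hx
    obtain ⟨d, hd, u, hu, hs⟩ := (LieSubmodule.mem_sup _ _ x).mp hx'
    have hu' : u ∈ V ⊔ W := by rw [← hsU]; exact hu
    obtain ⟨v, hv, w, hw, hs2⟩ := (LieSubmodule.mem_sup _ _ u).mp hu'
    rw [← hs, ← hs2]
    exact M.add_mem (hDM hd) (M.add_mem (hVM hv) (hWM hw))
  · exfalso
    obtain ⟨v0, hv0V, hv0N⟩ := Set.not_subset.mp hVN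
    let J : LieIdeal K L :=
      { toSubmodule := (V : Submodule K L) ⊓ N.toSubmodule
        lie_mem := by
          intro x y hy
          have hy' := Submodule.mem_inf.mp hy
          have hyV : y ∈ V := (LieSubmodule.mem_toSubmodule _).mp hy'.1
          have hyN : y ∈ N := hy'.2
          obtain ⟨w, hw, n, hn, hx⟩ := hNsup.1 x
          have e : ⁅x, y⁆ = ⁅w, y⁆ + ⁅n, y⁆ := by rw [hx, add_lie]
          have hwyX : ⁅w, y⁆ ∈ X := by
            rw [← hsX]
            exact ⟨V.lie_mem hyV, lie_mem_left K L W w y hw⟩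
          show ⁅x, y⁆ ∈ (V : Submodule K L) ⊓ N.toSubmodule
          rw [e]
          refine add_mem (Submodule.mem_inf.mpr ?_) (Submodule.mem_inf.mpr ?_)
          · exact ⟨(LieSubmodule.mem_toSubmodule _).mpr (hXV hwyX), hXN hwyX⟩
          · exact ⟨(LieSubmodule.mem_toSubmodule _).mpr (V.lie_mem hyV), N.lie_mem hn hyN⟩ }
    have hmemJ : ∀ {y : L}, y ∈ J ↔ y ∈ V ∧ y ∈ N := by
      intro y
      constructor
      · intro hy
        have hy' := Submodule.mem_inf.mp hy
        exact ⟨(LieSubmodule.mem_toSubmodule _).mp hy'.1, hy'.2⟩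
      · intro hy
        exact Submodule.mem_inf.mpr ⟨(LieSubmodule.mem_toSubmodule _).mpr hy.1, hy.2⟩
    have hJX : J = X := by
      have hXJ : X ≤ J := fun y hy => hmemJ.mpr ⟨hXV hy, hXN hy⟩
      have hJV : J ≤ V := fun y hy => (hmemJ.mp hy).1
      have hJne : J ≠ V := by
        intro he
        have hv0J : v0 ∈ J := by rw [he]; exact hv0V
        exact hv0N (hmemJ.mp hv0J).2
      by_contra hne
      exact hJne (hVXc.2 J (lt_of_le_of_ne hXJ (Ne.symm hne)) hJV)
    set q : Submodule K L := (V : Submodule K L) ⊔ (M.toSubmodule ⊓ N.toSubmodule) with hq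
    let S : LieSubalgebra K L :=
      { toSubmodule := q
        lie_mem' := by
          intro x y hx hy
          obtain ⟨v, hv, p0, hp0, rfl⟩ := Submodule.mem_sup.mp hx
          obtain ⟨v', hv', p1, hp1, rfl⟩ := Submodule.mem_sup.mp hy
          have hvV : v ∈ V := (LieSubmodule.mem_toSubmodule _).mp hv
          have hv'V : v' ∈ V := (LieSubmodule.mem_toSubmodule _).mp hv'
          have hp0' := Submodule.mem_inf.mp hp0
          have hp1' := Submodule.mem_inf.mp hp1
          have e : ⁅v + p0, v' + p1⁆ = (⁅v + p0, v'⁆ + ⁅v, p1⁆) + ⁅p0, p1⁆ := by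
            simp only [lie_add, add_lie]; abel
          show ⁅v + p0, v' + p1⁆ ∈ q
          rw [e]
          refine add_mem (add_mem ?_ ?_) ?_
          · exact Submodule.mem_sup_left
              ((LieSubmodule.mem_toSubmodule _).mpr (lie_mem_right K L V (v + p0) v' hv'V))
          · exact Submodule.mem_sup_left
              ((LieSubmodule.mem_toSubmodule _).mpr (lie_mem_left K L V v p1 hvV))
          · exact Submodule.mem_sup_right
              (Submodule.mem_inf.mpr ⟨M.lie_mem hp0'.1 hp1'.1, N.lie_mem hp0'.2 hp1'.2⟩) }
    have hVS : ∀ {v : L}, v ∈ V → v ∈ S :=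
      fun hv => Submodule.mem_sup_left ((LieSubmodule.mem_toSubmodule _).mpr hv)
    have hStop : S = ⊤ := by
      by_contra hSne
      obtain ⟨M', hM', hSM'⟩ := MRel.exists_le_maximal S hSne
      have hVM' : (V : Set L) ⊆ M' := fun x hx => hSM' (hVS hx)
      have hUM' : (U : Set L) ⊆ M' := hUVf.2 M' hM' hVM'
      have hWM' : (W : Set L) ⊆ M' := fun x hx => hUM' (hWU hx)
      have hMM' : M ≤ M' := by
        intro m hm
        obtain ⟨w, hw, n, hn, hmn⟩ := hNsup.1 m
        have hnM : n ∈ M := by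
          have he : n = m - w := by rw [hmn]; abel
          rw [he]
          exact M.sub_mem hm (hWM hw)
        have hnS : n ∈ S := Submodule.mem_sup_right (Submodule.mem_inf.mpr ⟨hnM, hn⟩)
        have hsum : w + n ∈ M' := M'.add_mem (hWM' hw) (hSM' hnS)
        rw [hmn]
        exact hsum
      have hMeq : M = M' := by
        by_contra hne2
        exact hM'.1 (hM.2 M' (lt_of_le_of_ne hMM' hne2))
      exact hVM (fun x hx => by rw [hMeq]; exact hVM' hx)
    have hNM : N ≤ M := by
      intro n hn
      have hnq : n ∈ q := by
        have hnS : n ∈ S := by rw [hStop]; exact LieSubalgebra.mem_top n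
        exact hnS
      obtain ⟨v, hv, p0, hp0, hvm⟩ := Submodule.mem_sup.mp hnq
      have hp0' := Submodule.mem_inf.mp hp0
      have hvN : v ∈ N := by
        have he : v = n - p0 := by rw [← hvm]; abel
        rw [he]
        exact N.sub_mem hn hp0'.2
      have hvJ : v ∈ J := hmemJ.mpr ⟨(LieSubmodule.mem_toSubmodule _).mp hv, hvN⟩
      have hvX : v ∈ X := by rw [← hJX]; exact hvJ
      have hvM : v ∈ M := hWM (hXW hvX)
      have hsum : v + p0 ∈ M := M.add_mem hvM hp0'.1
      rw [← hvm]
      exact hsum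
    have hNeq : N = M := by
      by_contra hne3
      exact hM.1 (hN.2 M (lt_of_le_of_ne hNM hne3))
    exact hWN (fun x hx => by rw [hNeq]; exact hWM hx)

end MRelAux

theorem stmt11 (A B C D : LieIdeal K L)
    (hAB : IsChiefFactor K L A B) (hCD : IsChiefFactor K L C D)
    (hrel : MRelated K L A B C D) :
    (FrattiniFactor K L A B ↔ FrattiniFactor K L C D) := by
  rcases hrel with ⟨R, S, hRSc, hRSs, ⟨h1, h2⟩, ⟨h3, h4⟩⟩ |
    ⟨U, V, W, X, hcr, ⟨h1, h2⟩, ⟨h3, h4⟩⟩ |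
    ⟨Y, Z, hYZ, ⟨h1, h2⟩, ⟨h3, h4⟩⟩ |
    ⟨U, V, W, X, hcr, ⟨h1, h2⟩, ⟨h3, h4⟩⟩
  · exact iff_of_false (MRel.not_frattini_of_searrow_down hRSs h1 h2)
      (MRel.not_frattini_of_searrow_down hRSs h3 h4)
  · exact iff_of_false (MRel.case2_left hcr h1 h2) (MRel.case2_right hcr h3 h4)
  · exact iff_of_true (MRel.frattini_of_searrow_up hAB hYZ h1 h2)
      (MRel.frattini_of_searrow_up hCD hYZ h3 h4)
  · exact iff_of_true (MRel.frattini_of_searrow_up hAB hcr.2.2.2.1 h1 h2)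
      (MRel.case4_right hcr hCD h3 h4)
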